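/- In the decomposition algorithm, suppose that whenever the pending interval [b_c, j'] of color c would overlap exactly d established refined segments of RS[φ_{j'}(c)] at an earlier column j' < j (with φ constant on [b_c, j]), an Active Split is triggered and [b_c, j'] becomes a refined segment. Then at column j, the interval [b_c, j] overlaps at most d refined segments of RS[c'], where c' = φ_j(c); moreover if RS[c'] is nonempty then b_c lies inside some refined segment of RS[c']. -/

import Mathlib

/-- `Partitions L x y`: the list `L` of (nonempty, sorted, consecutive) integer
intervals partitions `[x, y]`. -/
def Partitions : List (ℕ × ℕ) → ℕ → ℕ → Prop
  | [], x, y => y + 1 = x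
  | (b, e) :: t, x, y => b = x ∧ b ≤ e ∧ Partitions t (e + 1) y

/-- Number of intervals in `L` overlapping (nonempty intersection with) `[b, e]`. -/
def overlapCnt (b e : ℕ) (L : List (ℕ × ℕ)) : ℕ :=
  (L.filter (fun p => decide (p.1 ≤ e ∧ b ≤ p.2))).length

/-- Lemma (overlap at creation).  `A t` is the state of `RS[c']` (for
`c' = φ_t(c)`, constant on `[b, j]`) at column `t`: it partitions a prefix
`[1, y t]` of `[1, m]` with `y t ≤ t`, earlier states are prefixes of later ones,
and every segment is already present at the column of its right endpoint.
Suppose that whenever the pending interval `[b, j']` would overlap exactly `d`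
established segments of `A j'` at an earlier column `j' < j`, an Active Split
would have been triggered (so this never happens, as `[b, ·]` is still pending).
Then `[b, j]` overlaps at most `d` segments of `A j`; moreover if `A j` is
nonempty then `b` lies inside some segment of `A j`. -/
lemma partitions_le : ∀ {L : List (ℕ × ℕ)} {x y : ℕ}, Partitions L x y → x ≤ y + 1
  | [], x, y, h => le_of_eq h.symm
  | (a, e) :: t, x, y, h => by
    obtain ⟨hx, hae, ht⟩ := h
    have := partitions_le ht
    omega

lemma partitions_mem : ∀ {L : List (ℕ × ℕ)} {x y : ℕ}, Partitions L x y →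
    ∀ p ∈ L, x ≤ p.1 ∧ p.1 ≤ p.2 ∧ p.2 ≤ y
  | [], _, _, _, p, hp => by simp at hp
  | (a, e) :: t, x, y, h, p, hp => by
    obtain ⟨hx, hae, ht⟩ := h
    have hle := partitions_le ht
    rcases List.mem_cons.1 hp with h1 | h1
    · subst h1; simp; omega
    · have := partitions_mem ht p h1
      omega

lemma partitions_cover : ∀ {L : List (ℕ × ℕ)} {x y b : ℕ}, Partitions L x y →
    x ≤ b → b ≤ y → ∃ p ∈ L, p.1 ≤ b ∧ b ≤ p.2
  | [], x, y, b, h, hxb, hby => by simp [Partitions] at h; omega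
  | (a, e) :: t, x, y, b, h, hxb, hby => by
    obtain ⟨hx, hae, ht⟩ := h
    by_cases hbe : b ≤ e
    · exact ⟨(a, e), List.mem_cons_self, by omega, hbe⟩
    · obtain ⟨p, hp, h1, h2⟩ := partitions_cover ht (by omega) hby
      exact ⟨p, List.mem_cons_of_mem _ hp, h1, h2⟩

lemma partitions_split : ∀ {L1 L2 : List (ℕ × ℕ)} {x y : ℕ}, 1 ≤ x →
    Partitions (L1 ++ L2) x y → ∃ z, Partitions L1 x z ∧ Partitions L2 (z + 1) y
  | [], L2, x, y, hx, h => ⟨x - 1, by simp [Partitions]; omega, by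
      have : x - 1 + 1 = x := by omega
      rw [this]; exact h⟩
  | (a, e) :: t, L2, x, y, hx, h => by
    obtain ⟨hax, hae, ht⟩ := h
    obtain ⟨z, h1, h2⟩ := partitions_split (by omega) ht
    exact ⟨z, ⟨hax, hae, h1⟩, h2⟩

lemma partitions_append : ∀ {L1 L2 : List (ℕ × ℕ)} {x z y : ℕ},
    Partitions L1 x z → Partitions L2 (z + 1) y → Partitions (L1 ++ L2) x y
  | [], L2, x, z, y, h1, h2 => by
    simp [Partitions] at h1; subst h1; simpa using h2
  | (a, e) :: t, L2, x, z, y, h1, h2 => by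
    obtain ⟨hax, hae, ht⟩ := h1
    exact ⟨hax, hae, partitions_append ht h2⟩

lemma partitions_strip : ∀ {L1 R : List (ℕ × ℕ)} {x w : ℕ},
    Partitions L1 x w → Partitions (L1 ++ R) x w → Partitions R (w + 1) w
  | [], R, x, w, h1, h2 => by simp [Partitions] at h1; subst h1; simpa using h2
  | (a, e) :: t, R, x, w, h1, h2 => by
    obtain ⟨_, _, ht1⟩ := h1
    obtain ⟨_, _, ht2⟩ := h2
    exact partitions_strip ht1 ht2

lemma partitions_prefix_unique {L1 R : List (ℕ × ℕ)} {x w : ℕ}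
    (h1 : Partitions L1 x w) (h2 : Partitions (L1 ++ R) x w) : R = [] := by
  have h := partitions_strip h1 h2
  match R, h with
  | [], _ => rfl
  | (a, e) :: t, ⟨ha, hae, ht⟩ =>
    have := partitions_le ht
    omega

lemma filter_split {α : Type*} (f : α → Bool) :
    ∀ (L : List α) (F1 : List α) (a : α) (F2 : List α),
      L.filter f = F1 ++ a :: F2 →
      ∃ P S, L = P ++ a :: S ∧ P.filter f = F1 ∧ S.filter f = F2
  | [], F1, a, F2, h => by simp at h
  | x :: t, F1, a, F2, h => by
    by_cases hx : f x
    · rw [List.filter_cons_of_pos hx] at h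
      match F1, h with
      | [], h =>
        obtain ⟨hxa, ht⟩ := List.cons_eq_cons.1 (by simpa using h)
        exact ⟨[], t, by simp [hxa], by simp, ht⟩
      | y :: F1', h =>
        obtain ⟨hxy, ht⟩ := List.cons_eq_cons.1 (by simpa using h)
        obtain ⟨P, S, hl, hp, hs⟩ := filter_split f t F1' a F2 ht
        exact ⟨x :: P, S, by simp [hl], by
          rw [List.filter_cons_of_pos hx, hp, hxy], hs⟩
    · rw [List.filter_cons_of_neg (by simpa using hx)] at h
      obtain ⟨P, S, hl, hp, hs⟩ := filter_split f t F1 a F2 h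
      exact ⟨x :: P, S, by simp [hl], by
        rw [List.filter_cons_of_neg (by simpa using hx), hp], hs⟩

lemma prefix_total {α : Type*} : ∀ {L1 L2 L : List α},
    L1 <+: L → L2 <+: L → L1 <+: L2 ∨ L2 <+: L1
  | [], L2, L, _, _ => Or.inl (List.nil_prefix)
  | L1, [], L, _, _ => Or.inr (List.nil_prefix)
  | a1 :: t1, a2 :: t2, L, h1, h2 => by
    obtain ⟨R1, hR1⟩ := h1
    obtain ⟨R2, hR2⟩ := h2
    match L, hR1, hR2 with
    | a :: t, hR1, hR2 =>
      obtain ⟨e1, f1⟩ := List.cons_eq_cons.1 (by simpa using hR1)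
      obtain ⟨e2, f2⟩ := List.cons_eq_cons.1 (by simpa using hR2)
      rcases prefix_total (L := t) ⟨R1, f1⟩ ⟨R2, f2⟩ with h | h
      · exact Or.inl (by subst e1 e2; exact List.cons_prefix_cons.2 ⟨rfl, h⟩)
      · exact Or.inr (by subst e1 e2; exact List.cons_prefix_cons.2 ⟨rfl, h⟩)

lemma partitions_cons {q : ℕ × ℕ} {t : List (ℕ × ℕ)} {x y : ℕ}
    (h : Partitions (q :: t) x y) :
    q.1 = x ∧ q.1 ≤ q.2 ∧ Partitions t (q.2 + 1) y := by
  obtain ⟨a, e⟩ := q; exact h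

lemma partitions_singleton {q : ℕ × ℕ} {x : ℕ} (h1 : q.1 = x) (h2 : q.1 ≤ q.2) :
    Partitions [q] x q.2 := by
  obtain ⟨a, e⟩ := q; exact ⟨h1, h2, rfl⟩

theorem stmt7 (d b j : ℕ) (A : ℕ → List (ℕ × ℕ)) (y : ℕ → ℕ)
    (hpart : ∀ t, Partitions (A t) 1 (y t)) (hy : ∀ t, y t ≤ t)
    (hpre : ∀ t t', t ≤ t' → A t <+: A t')
    (happ : ∀ t, ∀ p ∈ A t, p ∈ A p.2)
    (hd : 1 < d) (hb1 : 1 ≤ b) (hbj : b ≤ j)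
    (hby : A j ≠ [] → b ≤ y j)
    (htrig : ∀ j', b ≤ j' → j' < j → overlapCnt b j' (A j') ≠ d) :
    overlapCnt b j (A j) ≤ d ∧
      (A j ≠ [] → ∃ p ∈ A j, p.1 ≤ b ∧ b ≤ p.2) := by
  refine ⟨?_, fun hne => partitions_cover (hpart j) hb1 (hby hne)⟩
  by_contra hgt
  push_neg at hgt
  simp only [overlapCnt] at hgt
  set f : ℕ × ℕ → Bool := fun p => decide (p.1 ≤ j ∧ b ≤ p.2) with hf
  set F := (A j).filter f with hF
  have hFlen : d + 1 ≤ F.length := hgt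
  have hidx : d - 1 < F.length := by omega
  set q := F[d-1] with hqdef
  have hqF : q ∈ F := List.getElem_mem hidx
  have hq : q.1 ≤ j ∧ b ≤ q.2 := by
    have := List.of_mem_filter hqF
    simpa [hf] using this
  have hdec : (A j).filter f = F.take (d-1) ++ q :: F.drop d := by
    conv_lhs => rw [← hF, ← List.take_append_drop (d-1) F,
      List.drop_eq_getElem_cons hidx]
    have : d - 1 + 1 = d := by omega
    rw [this]
  obtain ⟨P, S, hLps, hPf, hSf⟩ := filter_split f (A j) (F.take (d-1)) q (F.drop d) hdec
  have hPlen : (P.filter f).length = d - 1 := by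
    rw [hPf, List.length_take]; omega
  have hSne : S ≠ [] := by
    intro h
    have : (F.drop d).length = 0 := by rw [← hSf, h]; simp
    rw [List.length_drop] at this
    omega
  -- split the partition of A j
  have hpartj : Partitions (P ++ q :: S) 1 (y j) := hLps ▸ hpart j
  obtain ⟨z, hP, hqS⟩ := partitions_split (le_refl 1) hpartj
  obtain ⟨hq1z, hq12, hS⟩ := partitions_cons hqS
  -- membership facts
  have hqmem : q ∈ A j := by rw [hLps]; exact List.mem_append_right _ (List.mem_cons_self)
  have hqbd := partitions_mem (hpart j) q hqmem
  have hq2j : q.2 ≤ j := le_trans hqbd.2.2 (hy j)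
  have hAQpre : A q.2 <+: A j := hpre _ _ hq2j
  have hqAQ : q ∈ A q.2 := happ j q hqmem
  have hyq2 : y q.2 = q.2 :=
    le_antisymm (hy q.2) (partitions_mem (hpart q.2) q hqAQ).2.2
  have hAQpart : Partitions (A q.2) 1 q.2 := by
    have := hpart q.2; rwa [hyq2] at this
  have hMpart : Partitions (P ++ [q]) 1 q.2 :=
    partitions_append hP (partitions_singleton hq1z hq12)
  have hMpre : P ++ [q] <+: A j := ⟨S, by simp [hLps]⟩
  have hMAQ : P ++ [q] = A q.2 := by
    rcases prefix_total hMpre hAQpre with hc | hc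
    · obtain ⟨R, hR⟩ := hc
      have : R = [] := partitions_prefix_unique hMpart (hR ▸ hAQpart)
      rw [← hR, this, List.append_nil]
    · obtain ⟨R, hR⟩ := hc
      have : R = [] := partitions_prefix_unique hAQpart (hR ▸ hMpart)
      rw [← hR, this, List.append_nil]
  have hq2lt : q.2 < j := by
    rcases lt_or_eq_of_le hq2j with h | h
    · exact h
    · exfalso
      have hAQ : A q.2 = A j := by rw [h]
      have : P ++ [q] = P ++ q :: S := by rw [hMAQ, hAQ, hLps]
      have : ([q] : List (ℕ × ℕ)) = q :: S := by
        exact List.append_cancel_left this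
      simp at this
      exact hSne this
  -- compute the overlap count at column q.2
  have hcnt : overlapCnt b q.2 (A q.2) = d := by
    rw [← hMAQ]
    simp only [overlapCnt, List.filter_append]
    have hqfilter : List.filter (fun p => decide (p.1 ≤ q.2 ∧ b ≤ p.2)) [q] = [q] := by
      simp [hq12, hq.2]
    have hPfilter : List.filter (fun p => decide (p.1 ≤ q.2 ∧ b ≤ p.2)) P = P.filter f := by
      apply List.filter_congr
      intro p hp
      have hpbd := partitions_mem hP p hp
      have hpmem : p ∈ A j := by rw [hLps]; exact List.mem_append_left _ hp
      have hpj := partitions_mem (hpart j) p hpmem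
      have h1 : p.1 ≤ q.2 := by omega
      have h2 : p.1 ≤ j := le_trans hpj.2.2 (hy j) |>.trans' hpj.2.1
      simp [hf, h1, h2]
    rw [hqfilter, hPfilter, List.length_append, hPlen]
    simp; omega
  exact htrig q.2 hq.2 hq2lt hcnt
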